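/- The function n ↦ q^{n³} is not q-holonomic (Example 2.3(b)): there do not exist d ∈ ℕ and polynomials a_0, …, a_d ∈ ℚ(q)[u], not all zero, such that Σ_{j=0}^{d} a_j(q^n) · q^{(n+j)³} = 0 for all n ∈ ℕ. -/

import Mathlib

open RatFunc FunctionField Multiplicative Polynomial

noncomputable section
instance : DecidableEq (RatFunc ℚ) := Classical.decEq _

abbrev vv : Valuation (RatFunc ℚ) (WithZero (Multiplicative ℤ)) := FunctionField.inftyValuation ℚ

def ee (z : ℤ) : WithZero (Multiplicative ℤ) := ((Multiplicative.ofAdd z : Multiplicative ℤ) : WithZero (Multiplicative ℤ))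

lemma ee_ne_zero (z : ℤ) : ee z ≠ 0 := WithZero.coe_ne_zero

lemma ee_mul (a b : ℤ) : ee a * ee b = ee (a + b) := by
  rw [ee, ee, ee, ← WithZero.coe_mul, ← ofAdd_add]

lemma ee_le_ee {a b : ℤ} : ee a ≤ ee b ↔ a ≤ b := by
  rw [ee, ee, WithZero.coe_le_coe, Multiplicative.ofAdd_le]

lemma ee_lt_ee {a b : ℤ} : ee a < ee b ↔ a < b := by
  rw [ee, ee, WithZero.coe_lt_coe, Multiplicative.ofAdd_lt]

lemma vv_nonzero {x : RatFunc ℚ} (hx : x ≠ 0) : vv x = ee x.intDegree := by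
  rw [show vv x = RatFunc.inftyValuationDef ℚ x from rfl, RatFunc.inftyValuation_of_nonzero ℚ hx, ee, WithZero.exp]

lemma vv_X_pow (m : ℕ) : vv ((RatFunc.X : RatFunc ℚ) ^ m) = ee m := by
  rw [map_pow, show vv RatFunc.X = RatFunc.inftyValuationDef ℚ RatFunc.X from rfl,
    ← RatFunc.inftyValuation_apply, RatFunc.inftyValuation.X, ee, WithZero.exp]
  rw [← WithZero.coe_pow, WithZero.coe_inj, ← ofAdd_nsmul]
  norm_num

lemma coeff_bound (d : ℕ) (a : ℕ → Polynomial (RatFunc ℚ)) :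
    ∃ B : ℤ, ∀ j ∈ Finset.range (d+1), ∀ k, vv ((a j).coeff k) ≤ ee B := by
  obtain ⟨B, hB⟩ := Finset.exists_le
    ((Finset.range (d+1)).biUnion fun j => (a j).support.image fun k => ((a j).coeff k).intDegree)
  refine ⟨B, fun j hj k => ?_⟩
  by_cases hc : (a j).coeff k = 0
  · rw [hc, map_zero]; exact zero_le'
  · rw [vv_nonzero hc, ee_le_ee]
    exact hB _ (Finset.mem_biUnion.mpr ⟨j, hj,
      Finset.mem_image.mpr ⟨k, Polynomial.mem_support_iff.mpr hc, rfl⟩⟩)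

lemma v_eval_le (p : Polynomial (RatFunc ℚ)) {B : ℤ} (hB : ∀ k, vv (p.coeff k) ≤ ee B)
    (n : ℕ) : vv (p.eval ((RatFunc.X : RatFunc ℚ) ^ n)) ≤ ee (n * p.natDegree + B) := by
  rw [Polynomial.eval_eq_sum_range]
  refine Valuation.map_sum_le _ fun i hi => ?_
  rw [map_mul, ← pow_mul, vv_X_pow]
  calc vv (p.coeff i) * ee (n * i) ≤ ee B * ee (n * p.natDegree) := by
        refine mul_le_mul' (hB i) (ee_le_ee.mpr ?_)
        have : i ≤ p.natDegree := Nat.lt_succ_iff.mp (Finset.mem_range.mp hi)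
        exact mul_le_mul_of_nonneg_left (by exact_mod_cast this) (by positivity)
    _ = ee (n * p.natDegree + B) := by rw [ee_mul]; ring_nf

lemma v_eval_eq (p : Polynomial (RatFunc ℚ)) (hp : p ≠ 0) {B : ℤ}
    (hB : ∀ k, vv (p.coeff k) ≤ ee B) (n : ℕ)
    (hn : B - p.leadingCoeff.intDegree < (n : ℤ)) :
    vv (p.eval ((RatFunc.X : RatFunc ℚ) ^ n))
      = ee (n * p.natDegree + p.leadingCoeff.intDegree) := by
  have hlc : p.leadingCoeff ≠ 0 := Polynomial.leadingCoeff_ne_zero.mpr hp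
  rw [Polynomial.eval_eq_sum_range]
  have hval : ∀ i, vv (p.coeff i * ((RatFunc.X : RatFunc ℚ) ^ n) ^ i)
      = vv (p.coeff i) * ee (n * i) := by
    intro i; rw [map_mul, ← pow_mul, vv_X_pow]; push_cast; ring_nf
  have hJ : vv (p.coeff p.natDegree * ((RatFunc.X : RatFunc ℚ) ^ n) ^ p.natDegree)
      = ee ((n : ℤ) * p.natDegree + p.leadingCoeff.intDegree) := by
    rw [hval, Polynomial.coeff_natDegree, vv_nonzero hlc, ee_mul]; ring_nf
  rw [Valuation.map_sum_eq_of_lt (v := vv) (j := p.natDegree)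
    (Finset.self_mem_range_succ _) ?_, hJ]
  intro i hi
  simp only [Finset.mem_sdiff, Finset.mem_range, Finset.mem_singleton] at hi
  have hilt : i < p.natDegree := by omega
  rw [hval, hJ]
  calc vv (p.coeff i) * ee (n * i) ≤ ee B * ee (n * i) := mul_le_mul' (hB i) le_rfl
    _ = ee (B + n * i) := ee_mul _ _
    _ < ee ((n : ℤ) * p.natDegree + p.leadingCoeff.intDegree) := by
        rw [ee_lt_ee]
        have h1 : (i : ℤ) + 1 ≤ (p.natDegree : ℤ) := by exact_mod_cast hilt
        nlinarith [Int.natCast_nonneg n, Int.natCast_nonneg i]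

open scoped BigOperators

/-- Example 2.3(b): the function `n ↦ q^{n³}` is not q-holonomic: there are no
`d ∈ ℕ` and polynomials `a_0, …, a_d ∈ ℚ(q)[u]`, not all zero, with
`Σ_{j=0}^d a_j(q^n) q^{(n+j)³} = 0` for all `n ∈ ℕ`. -/
theorem not_qholonomic_q_pow_cube :
    ¬ ∃ (d : ℕ) (a : ℕ → Polynomial (RatFunc ℚ)),
        (∃ j ≤ d, a j ≠ 0) ∧
        ∀ n : ℕ, ∑ j ∈ Finset.range (d + 1),
          (a j).eval ((RatFunc.X : RatFunc ℚ) ^ n) *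
            (RatFunc.X : RatFunc ℚ) ^ ((n + j) ^ 3) = 0 := by
  rintro ⟨d, a, ⟨j0, hj0d, hj0⟩, h⟩
  classical
  set S := (Finset.range (d+1)).filter (fun j => a j ≠ 0) with hS
  have hSne : S.Nonempty :=
    ⟨j0, Finset.mem_filter.mpr ⟨Finset.mem_range.mpr (Nat.lt_succ_of_le hj0d), hj0⟩⟩
  set J := S.max' hSne with hJdef
  have hJS := S.max'_mem hSne
  have hJne : a J ≠ 0 := (Finset.mem_filter.mp hJS).2
  have hJmem : J ∈ Finset.range (d+1) := (Finset.mem_filter.mp hJS).1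
  have hmax : ∀ i ∈ Finset.range (d+1), a i ≠ 0 → i ≤ J := fun i hi hai =>
    Finset.le_max' S i (Finset.mem_filter.mpr ⟨hi, hai⟩)
  obtain ⟨B, hB⟩ := coeff_bound d a
  set c := ((a J).leadingCoeff).intDegree with hc
  set D := (Finset.range (d+1)).sup (fun j => (a j).natDegree) with hD
  set n := D + (B - c).toNat + 1 with hn
  have hnc : B - c < (n : ℤ) := by
    have := Int.self_le_toNat (B - c)
    have : (((B - c).toNat : ℤ)) ≤ (n : ℤ) - 1 := by push_cast [hn]; omega
    omega
  have hnD : (D : ℤ) + 1 ≤ (n : ℤ) := by push_cast [hn]; omega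
  have hDub : ∀ i ∈ Finset.range (d+1), ((a i).natDegree : ℤ) ≤ (D : ℤ) := by
    intro i hi
    exact_mod_cast Finset.le_sup (f := fun j => (a j).natDegree) hi
  clear_value n D
  set f : ℕ → RatFunc ℚ := fun j =>
    (a j).eval ((RatFunc.X : RatFunc ℚ) ^ n) * (RatFunc.X : RatFunc ℚ) ^ ((n + j)^3) with hf
  have hfJ : vv (f J) = ee ((n : ℤ) * (a J).natDegree + c + (((n + J)^3 : ℕ) : ℤ)) := by
    rw [hf]; simp only
    rw [map_mul, vv_X_pow, v_eval_eq (a J) hJne (hB J hJmem) n hnc, ee_mul]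
  have h0 : vv (f J) ≠ 0 := by rw [hfJ]; exact ee_ne_zero _
  have hlt : ∀ i ∈ Finset.range (d+1) \ {J}, vv (f i) < vv (f J) := by
    intro i hi
    simp only [Finset.mem_sdiff, Finset.mem_singleton] at hi
    obtain ⟨hi1, hi2⟩ := hi
    by_cases hai : a i = 0
    · have hz : f i = 0 := by rw [hf]; simp [hai]
      rw [hz, map_zero]
      exact zero_lt_iff.mpr h0
    · have hiJ : i < J := lt_of_le_of_ne (hmax i hi1 hai) hi2
      have hub : vv (f i) ≤ ee ((n : ℤ) * (a i).natDegree + B + (((n + i)^3 : ℕ) : ℤ)) := by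
        rw [hf]; simp only
        rw [map_mul, vv_X_pow, show ((n : ℤ) * (a i).natDegree + B + (((n + i)^3 : ℕ) : ℤ))
          = ((n : ℤ) * (a i).natDegree + B) + (((n + i)^3 : ℕ) : ℤ) by ring, ← ee_mul]
        exact mul_le_mul' (v_eval_le (a i) (hB i hi1) n) le_rfl
      refine lt_of_le_of_lt hub ?_
      rw [hfJ, ee_lt_ee]
      have hDi : ((a i).natDegree : ℤ) ≤ (D : ℤ) := hDub i hi1
      have hij : (i : ℤ) + 1 ≤ (J : ℤ) := by exact_mod_cast hiJ
      have hN0 : (0 : ℤ) ≤ (n : ℤ) := Int.natCast_nonneg n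
      have hI0 : (0 : ℤ) ≤ (i : ℤ) := Int.natCast_nonneg i
      have hdJ0 : (0 : ℤ) ≤ ((a J).natDegree : ℤ) := Int.natCast_nonneg _
      push_cast
      have hcube : ((n : ℤ) + i + 1)^3 ≤ ((n : ℤ) + J)^3 := by
        have h1 : (0 : ℤ) ≤ (n : ℤ) + i + 1 := by linarith
        have h2 : (n : ℤ) + i + 1 ≤ (n : ℤ) + J := by linarith
        exact pow_le_pow_left₀ h1 h2 3
      have hexp : ((n : ℤ) + i + 1)^3
          = ((n : ℤ) + i)^3 + 3*((n : ℤ) + i)^2 + 3*((n : ℤ) + i) + 1 := by ring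
      have e1 : (n : ℤ) * ((a i).natDegree : ℤ) ≤ (n : ℤ) * (D : ℤ) :=
        mul_le_mul_of_nonneg_left hDi hN0
      have e2 : (n : ℤ) * (D : ℤ) ≤ (n : ℤ) * ((n : ℤ) - 1) :=
        mul_le_mul_of_nonneg_left (by linarith) hN0
      have e3 : 3 * ((n : ℤ) + i)^2 ≥ 3 * ((n : ℤ) * (n : ℤ)) := by nlinarith
      nlinarith [mul_nonneg hN0 hdJ0]
  have hkey := Valuation.map_sum_eq_of_lt (v := vv) (f := f) hJmem (by
    intro i hi
    refine hlt i ?_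
    simp only [Finset.mem_sdiff, Finset.mem_singleton] at hi ⊢
    exact hi)
  have hsum : ∑ i ∈ Finset.range (d+1), f i = 0 := h n
  rw [hsum, map_zero] at hkey
  exact h0 hkey.symm
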